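/- With the setting of the concentration inequality (constant drift α, N independent particles Y^k, empirical measure m^N_{Y_h}, and m(h) solving the drift-heat equation from the empirical initial condition), for any 1-Lipschitz function φ : ℝ^d → ℝ and any x > 0, ℙ[∫φ d(m(h) − m^N_{Y_h}) > x] ≤ exp(−N x² / (C h)) for a constant C depending only on d. -/

import Mathlib

open MeasureTheory ProbabilityTheory Metric Set
open Real NNReal

/-- The centered Gaussian measure on `ℝ^d` with covariance `v·I_d`. -/
noncomputable def stdGaussianE (d : ℕ) (v : ℝ) : Measure (EuclideanSpace ℝ (Fin d)) :=
  Measure.map (MeasurableEquiv.toLp 2 (Fin d → ℝ))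
    (Measure.pi fun _ : Fin d => gaussianReal 0 (Real.toNNReal v))

/-- The empirical measure of the points `y 0, ..., y (N-1)`. -/
noncomputable def emp {d N : ℕ} (y : Fin N → EuclideanSpace ℝ (Fin d)) :
    Measure (EuclideanSpace ℝ (Fin d)) :=
  (N : ENNReal)⁻¹ • ∑ k, Measure.dirac (y k)

/-- The solution at time `h` of `∂_t m + α·Dm - Δm = 0` started from the empirical
measure of `y`. -/
noncomputable def heatSol {d N : ℕ} (y : Fin N → EuclideanSpace ℝ (Fin d))
    (α : EuclideanSpace ℝ (Fin d)) (h : ℝ) : Measure (EuclideanSpace ℝ (Fin d)) :=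
  Measure.map (fun p : EuclideanSpace ℝ (Fin d) × EuclideanSpace ℝ (Fin d) =>
      p.1 + h • α + p.2) ((emp y).prod (stdGaussianE d (2 * h)))



lemma integrable_dirac' {α : Type*} [MeasurableSpace α] [MeasurableSingletonClass α]
    {f : α → ℝ} (hf : Measurable f) (a : α) : Integrable f (Measure.dirac a) :=
  ⟨hf.aestronglyMeasurable, by
    refine (hasFiniteIntegral_congr (ae_eq_dirac f)).mpr ?_
    simp [HasFiniteIntegral]⟩

lemma gauss_pdf_shift (c : ℝ) (v : ℝ≥0) (hv : v ≠ 0) (x : ℝ) :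
    Real.exp (c * x) * gaussianPDFReal 0 v x
      = Real.exp (c ^ 2 * v / 2) * gaussianPDFReal (c * v) v x := by
  have hvpos : (0:ℝ) < v := lt_of_le_of_ne v.coe_nonneg (by exact_mod_cast hv.symm)
  simp only [gaussianPDFReal]
  rw [mul_left_comm, ← Real.exp_add, mul_left_comm, ← Real.exp_add]
  congr 1
  field_simp
  ring

lemma gauss_integral_eq (v : ℝ≥0) (hv : v ≠ 0) (g : ℝ → ℝ) :
    ∫ x, g x ∂(gaussianReal 0 v) = ∫ x, g x * gaussianPDFReal 0 v x ∂volume := by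
  rw [gaussianReal_of_var_ne_zero _ hv]
  have h1 : gaussianPDF 0 v = fun x => ((gaussianPDFReal 0 v x).toNNReal : ENNReal) := rfl
  rw [h1, integral_withDensity_eq_integral_smul
    ((measurable_gaussianPDFReal 0 v).real_toNNReal)]
  congr 1
  ext x
  simp [NNReal.smul_def, Real.coe_toNNReal _ (gaussianPDFReal_nonneg 0 v x), mul_comm]

lemma gauss_integrable_iff (v : ℝ≥0) (hv : v ≠ 0) (g : ℝ → ℝ) :
    Integrable g (gaussianReal 0 v)
      ↔ Integrable (fun x => g x * gaussianPDFReal 0 v x) volume := by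
  rw [gaussianReal_of_var_ne_zero _ hv]
  have h1 : gaussianPDF 0 v = fun x => ((gaussianPDFReal 0 v x).toNNReal : ENNReal) := rfl
  rw [h1, integrable_withDensity_iff_integrable_smul
    ((measurable_gaussianPDFReal 0 v).real_toNNReal)]
  constructor <;> intro hh <;> refine hh.congr (ae_of_all _ fun x => ?_) <;>
    simp [NNReal.smul_def, Real.coe_toNNReal _ (gaussianPDFReal_nonneg 0 v x), mul_comm]

lemma gauss_exp_int (c : ℝ) (v : ℝ≥0) :
    Integrable (fun x => Real.exp (c * x)) (gaussianReal 0 v) ∧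
      ∫ x, Real.exp (c * x) ∂(gaussianReal 0 v) = Real.exp (c ^ 2 * v / 2) := by
  rcases eq_or_ne v 0 with hv | hv
  · subst hv
    rw [gaussianReal_zero_var]
    constructor
    · exact integrable_dirac' (measurable_const.mul measurable_id).exp 0
    · rw [integral_dirac]; simp
  · have hint2 : Integrable (fun x => Real.exp (c * x) * gaussianPDFReal 0 v x) volume := by
      have := (integrable_gaussianPDFReal (c * v) v).const_mul (Real.exp (c ^ 2 * v / 2))
      exact this.congr (ae_of_all _ fun x => (gauss_pdf_shift c v hv x).symm)
    refine ⟨(gauss_integrable_iff v hv _).mpr hint2, ?_⟩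
    rw [gauss_integral_eq v hv]
    calc ∫ x, Real.exp (c * x) * gaussianPDFReal 0 v x ∂volume
        = ∫ x, Real.exp (c ^ 2 * v / 2) * gaussianPDFReal (c * v) v x ∂volume := by
          congr 1; ext x; exact gauss_pdf_shift c v hv x
      _ = Real.exp (c ^ 2 * v / 2) := by
          rw [integral_const_mul, integral_gaussianPDFReal_eq_one (c * v) hv, mul_one]

lemma gauss_cosh_int (c : ℝ) (v : ℝ≥0) :
    Integrable (fun x => Real.cosh (c * x)) (gaussianReal 0 v) ∧
      ∫ x, Real.cosh (c * x) ∂(gaussianReal 0 v) = Real.exp (c ^ 2 * v / 2) := by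
  obtain ⟨h1, e1⟩ := gauss_exp_int c v
  obtain ⟨h2, e2⟩ := gauss_exp_int (-c) v
  have hc : ∀ x : ℝ, Real.cosh (c * x) = (Real.exp (c * x) + Real.exp (-c * x)) / 2 := by
    intro x; rw [Real.cosh_eq]; ring_nf
  constructor
  · exact ((h1.add h2).div_const 2).congr (ae_of_all _ fun x => (hc x).symm)
  · calc ∫ x, Real.cosh (c * x) ∂(gaussianReal 0 v)
        = ∫ x, (Real.exp (c * x) + Real.exp (-c * x)) / 2 ∂(gaussianReal 0 v) := by
          congr 1; ext x; exact hc x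
      _ = ((∫ x, Real.exp (c * x) ∂(gaussianReal 0 v))
            + ∫ x, Real.exp (-c * x) ∂(gaussianReal 0 v)) / 2 := by
          rw [integral_div, integral_add h1 h2]
      _ = Real.exp (c ^ 2 * v / 2) := by rw [e1, e2, neg_pow]; ring_nf

lemma gauss_sinh_int (c : ℝ) (v : ℝ≥0) :
    Integrable (fun x => Real.sinh (c * x)) (gaussianReal 0 v) ∧
      ∫ x, Real.sinh (c * x) ∂(gaussianReal 0 v) = 0 := by
  obtain ⟨h1, e1⟩ := gauss_exp_int c v
  obtain ⟨h2, e2⟩ := gauss_exp_int (-c) v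
  have hc : ∀ x : ℝ, Real.sinh (c * x) = (Real.exp (c * x) - Real.exp (-c * x)) / 2 := by
    intro x; rw [Real.sinh_eq]; ring_nf
  constructor
  · exact ((h1.sub h2).div_const 2).congr (ae_of_all _ fun x => (hc x).symm)
  · calc ∫ x, Real.sinh (c * x) ∂(gaussianReal 0 v)
        = ∫ x, (Real.exp (c * x) - Real.exp (-c * x)) / 2 ∂(gaussianReal 0 v) := by
          congr 1; ext x; exact hc x
      _ = ((∫ x, Real.exp (c * x) ∂(gaussianReal 0 v))
            - ∫ x, Real.exp (-c * x) ∂(gaussianReal 0 v)) / 2 := by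
          rw [integral_div, integral_sub h1 h2]
      _ = 0 := by rw [e1, e2, neg_pow]; ring_nf

lemma pi_integral_prod {d : ℕ} (μ : Measure ℝ) [SigmaFinite μ] (f : Fin d → ℝ → ℝ) :
    ∫ x : Fin d → ℝ, ∏ i, f i (x i) ∂(Measure.pi fun _ => μ) = ∏ i, ∫ x, f i x ∂μ := by
  letI : MeasureSpace ℝ := ⟨μ⟩
  haveI : SigmaFinite (volume : Measure ℝ) := ‹SigmaFinite μ›
  exact integral_fintype_prod_eq_prod f

lemma pi_integrable_prod {d : ℕ} (μ : Measure ℝ) [SigmaFinite μ] {f : Fin d → ℝ → ℝ}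
    (hf : ∀ i, Integrable (f i) μ) :
    Integrable (fun x : Fin d → ℝ => ∏ i, f i (x i)) (Measure.pi fun _ => μ) := by
  letI : MeasureSpace ℝ := ⟨μ⟩
  haveI : SigmaFinite (volume : Measure ℝ) := ‹SigmaFinite μ›
  exact Integrable.fintype_prod hf

lemma pi_marginal {d : ℕ} (μ : Measure ℝ) [IsProbabilityMeasure μ] (i : Fin d)
    (f : ℝ → ℝ) (hf : Integrable f μ) :
    Integrable (fun x : Fin d → ℝ => f (x i)) (Measure.pi fun _ => μ) ∧
      ∫ x : Fin d → ℝ, f (x i) ∂(Measure.pi fun _ => μ) = ∫ x, f x ∂μ := by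
  classical
  set g : Fin d → ℝ → ℝ := fun j => if j = i then f else fun _ => 1 with hg
  have hgi : ∀ j, Integrable (g j) μ := by
    intro j; by_cases hji : j = i <;> simp [hg, hji, hf, integrable_const]
  have hprod : ∀ x : Fin d → ℝ, (∏ j, g j (x j)) = f (x i) := by
    intro x
    rw [Finset.prod_eq_single i (fun j _ hji => by simp [hg, hji]) (by simp)]
    simp [hg]
  constructor
  · have := pi_integrable_prod μ hgi
    exact this.congr (ae_of_all _ fun x => hprod x)
  · calc ∫ x : Fin d → ℝ, f (x i) ∂(Measure.pi fun _ => μ)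
        = ∫ x : Fin d → ℝ, ∏ j, g j (x j) ∂(Measure.pi fun _ => μ) := by
          congr 1; ext x; exact (hprod x).symm
      _ = ∏ j, ∫ x, g j x ∂μ := pi_integral_prod μ g
      _ = ∫ x, f x ∂μ := by
          rw [Finset.prod_eq_single i (fun j _ hji => by simp [hg, hji]) (by simp)]
          simp [hg]

lemma gauss_abs_exp_int (B : ℝ) (v : ℝ≥0) :
    Integrable (fun x : ℝ => Real.exp (B * |x|)) (gaussianReal 0 v) := by
  obtain ⟨h1, -⟩ := gauss_exp_int B v
  obtain ⟨h2, -⟩ := gauss_exp_int (-B) v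
  refine ((h1.add h2).mono' ?_ (ae_of_all _ fun x => ?_))
  · exact ((measurable_const.mul measurable_id.norm).exp).aestronglyMeasurable
  · simp only [Real.norm_eq_abs, abs_of_pos (Real.exp_pos _), Pi.add_apply]
    rcases abs_cases x with ⟨hx, -⟩ | ⟨hx, -⟩
    · rw [hx]
      linarith [Real.exp_nonneg (-B * x)]
    · rw [hx]
      have h3 : B * -x = -B * x := by ring
      rw [h3]
      linarith [Real.exp_nonneg (B * x)]

lemma pi_exp_abs_sum_int {d : ℕ} (B : ℝ) (v : ℝ≥0) :
    Integrable (fun x : Fin d → ℝ => Real.exp (B * ∑ i, |x i|))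
      (Measure.pi fun _ => gaussianReal 0 v) := by
  have := pi_integrable_prod (d := d) (gaussianReal 0 v)
    (f := fun _ (x : ℝ) => Real.exp (B * |x|)) (fun _ => gauss_abs_exp_int B v)
  refine this.congr (ae_of_all _ fun x => ?_)
  simp only [← Real.exp_sum, Finset.mul_sum]

lemma prod_cosh_coord {d : ℕ} (c : ℝ) (v : ℝ≥0) (i : Fin d) :
    Integrable (fun p : (Fin d → ℝ) × (Fin d → ℝ) => Real.cosh (c * (p.1 i - p.2 i)))
      ((Measure.pi fun _ => gaussianReal 0 v).prod (Measure.pi fun _ => gaussianReal 0 v)) ∧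
    ∫ p : (Fin d → ℝ) × (Fin d → ℝ), Real.cosh (c * (p.1 i - p.2 i))
        ∂((Measure.pi fun _ => gaussianReal 0 v).prod (Measure.pi fun _ => gaussianReal 0 v))
      = Real.exp (c ^ 2 * v) := by
  set pm : Measure (Fin d → ℝ) := Measure.pi fun _ => gaussianReal 0 v with hpm
  obtain ⟨hci, hce⟩ := pi_marginal (gaussianReal 0 v) i _ (gauss_cosh_int c v).1
  obtain ⟨hsi, hse⟩ := pi_marginal (gaussianReal 0 v) i _ (gauss_sinh_int c v).1
  have hpt : ∀ p : (Fin d → ℝ) × (Fin d → ℝ), Real.cosh (c * (p.1 i - p.2 i))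
      = Real.cosh (c * p.1 i) * Real.cosh (c * p.2 i)
        - Real.sinh (c * p.1 i) * Real.sinh (c * p.2 i) := by
    intro p; rw [mul_sub, Real.cosh_sub]
  have hint1 : Integrable (fun p : (Fin d → ℝ) × (Fin d → ℝ) =>
      Real.cosh (c * p.1 i) * Real.cosh (c * p.2 i)) (pm.prod pm) := hci.mul_prod hci
  have hint2 : Integrable (fun p : (Fin d → ℝ) × (Fin d → ℝ) =>
      Real.sinh (c * p.1 i) * Real.sinh (c * p.2 i)) (pm.prod pm) := hsi.mul_prod hsi
  constructor
  · exact (hint1.sub hint2).congr (ae_of_all _ fun p => (hpt p).symm)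
  · calc ∫ p : (Fin d → ℝ) × (Fin d → ℝ), Real.cosh (c * (p.1 i - p.2 i)) ∂(pm.prod pm)
        = ∫ p : (Fin d → ℝ) × (Fin d → ℝ), (Real.cosh (c * p.1 i) * Real.cosh (c * p.2 i)
            - Real.sinh (c * p.1 i) * Real.sinh (c * p.2 i)) ∂(pm.prod pm) := by
          congr 1; ext p; exact hpt p
      _ = (∫ x, Real.cosh (c * x i) ∂pm) * (∫ x, Real.cosh (c * x i) ∂pm)
            - (∫ x, Real.sinh (c * x i) ∂pm) * (∫ x, Real.sinh (c * x i) ∂pm) := by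
          rw [integral_sub hint1 hint2,
            integral_prod_mul (f := fun x : Fin d → ℝ => Real.cosh (c * x i))
              (g := fun x : Fin d → ℝ => Real.cosh (c * x i)),
            integral_prod_mul (f := fun x : Fin d → ℝ => Real.sinh (c * x i))
              (g := fun x : Fin d → ℝ => Real.sinh (c * x i))]
      _ = Real.exp (c ^ 2 * v) := by
          rw [hce, hse, (gauss_cosh_int c v).2, (gauss_sinh_int c v).2, ← Real.exp_add]
          ring_nf


lemma esymm_apply {d : ℕ} (x : Fin d → ℝ) (i : Fin d) :
    (MeasurableEquiv.toLp 2 (Fin d → ℝ)) x i = x i := rfl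

set_option maxHeartbeats 800000 in
lemma stdGaussianE_two_smul {d : ℕ} {h : ℝ} (hh : 0 ≤ h) :
    stdGaussianE d (2 * h)
      = Measure.map (fun z : EuclideanSpace ℝ (Fin d) => Real.sqrt 2 • z) (stdGaussianE d h) := by
  have hmp : ∀ i : Fin d, MeasurePreserving (fun x : ℝ => Real.sqrt 2 * x)
      (gaussianReal 0 (Real.toNNReal h)) (gaussianReal 0 (Real.toNNReal (2 * h))) := by
    intro i
    refine ⟨measurable_const_mul _, ?_⟩
    rw [gaussianReal_map_const_mul, mul_zero]
    congr 1
    ext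
    rw [NNReal.coe_mul, NNReal.coe_mk, Real.sq_sqrt (by norm_num : (0:ℝ) ≤ 2),
      Real.coe_toNNReal _ hh, Real.coe_toNNReal _ (by linarith)]
  have hpi := measurePreserving_pi (fun _ : Fin d => gaussianReal 0 (Real.toNNReal h))
    (fun _ : Fin d => gaussianReal 0 (Real.toNNReal (2 * h))) hmp
  rw [stdGaussianE, stdGaussianE, ← hpi.map_eq, Measure.map_map, Measure.map_map]
  · congr 1
  · exact measurable_const_smul _
  · exact (MeasurableEquiv.toLp 2 (Fin d → ℝ)).measurable
  · exact (MeasurableEquiv.toLp 2 (Fin d → ℝ)).measurable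
  · exact measurable_pi_iff.mpr fun i => (measurable_const_mul _).comp (measurable_pi_apply i)

lemma norm_esymm_le {d : ℕ} (u : Fin d → ℝ) :
    ‖(MeasurableEquiv.toLp 2 (Fin d → ℝ)) u‖ ≤ ∑ i, |u i| := by
  rw [EuclideanSpace.norm_eq]
  have h1 : ∀ i : Fin d, ‖(MeasurableEquiv.toLp 2 (Fin d → ℝ)) u i‖ ^ 2 = |u i| ^ 2 := by
    intro i; rw [esymm_apply, Real.norm_eq_abs]
  calc Real.sqrt (∑ i, ‖(MeasurableEquiv.toLp 2 (Fin d → ℝ)) u i‖ ^ 2)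
      = Real.sqrt (∑ i, |u i| ^ 2) := by rw [Finset.sum_congr rfl fun i _ => h1 i]
    _ ≤ Real.sqrt ((∑ i, |u i|) ^ 2) := Real.sqrt_le_sqrt
        (Finset.sum_sq_le_sq_sum_of_nonneg fun i _ => abs_nonneg _)
    _ = ∑ i, |u i| := Real.sqrt_sq (Finset.sum_nonneg fun i _ => abs_nonneg _)

lemma gauss_abs_int (v : ℝ≥0) : Integrable (fun x : ℝ => |x|) (gaussianReal 0 v) := by
  refine (gauss_abs_exp_int 1 v).mono' measurable_abs.aestronglyMeasurable
    (ae_of_all _ fun x => ?_)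
  rw [Real.norm_eq_abs, abs_abs, one_mul]
  linarith [Real.add_one_le_exp |x|, abs_nonneg x]

set_option maxHeartbeats 1600000 in
lemma key_mgf {d : ℕ} (hd : 0 < d) (φ : EuclideanSpace ℝ (Fin d) → ℝ) (hφ : LipschitzWith 1 φ)
    (a : EuclideanSpace ℝ (Fin d)) {h : ℝ} (hh : 0 < h) {t : ℝ} (ht : 0 ≤ t) :
    Integrable (fun z => Real.exp (t * ((∫ w, φ (a + w) ∂(stdGaussianE d (2*h)))
        - φ (a + Real.sqrt 2 • z)))) (stdGaussianE d h) ∧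
      ∫ z, Real.exp (t * ((∫ w, φ (a + w) ∂(stdGaussianE d (2*h)))
          - φ (a + Real.sqrt 2 • z))) ∂(stdGaussianE d h)
        ≤ Real.exp (2 * d^2 * t^2 * h) := by
  set eqv := (MeasurableEquiv.toLp 2 (Fin d → ℝ)).symm with heqv
  set vh := Real.toNNReal h with hvh
  have hvhr : (vh : ℝ) = h := Real.coe_toNNReal _ hh.le
  set pm : Measure (Fin d → ℝ) := Measure.pi fun _ : Fin d => gaussianReal 0 vh with hpm
  haveI : IsProbabilityMeasure pm := by rw [hpm]; infer_instance
  set F : (Fin d → ℝ) → ℝ := fun u => φ (a + Real.sqrt 2 • eqv.symm u) with hF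
  have hFmeas : Measurable F :=
    hφ.continuous.measurable.comp ((eqv.symm.measurable.const_smul (Real.sqrt 2)).const_add a)
  -- bound on F
  have hFbound : ∀ u, |F u| ≤ |φ a| + Real.sqrt 2 * ∑ i, |u i| := by
    intro u
    have h1 : |F u - φ a| ≤ Real.sqrt 2 * ∑ i, |u i| := by
      have h2 := hφ.dist_le_mul (a + Real.sqrt 2 • eqv.symm u) a
      rw [NNReal.coe_one, one_mul, Real.dist_eq, dist_eq_norm, add_sub_cancel_left,
        norm_smul, Real.norm_eq_abs, abs_of_nonneg (Real.sqrt_nonneg 2)] at h2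
      exact h2.trans (mul_le_mul_of_nonneg_left (norm_esymm_le u) (Real.sqrt_nonneg 2))
    calc |F u| = |φ a + (F u - φ a)| := by ring_nf
      _ ≤ |φ a| + |F u - φ a| := abs_add_le _ _
      _ ≤ |φ a| + Real.sqrt 2 * ∑ i, |u i| := by linarith
  -- Lipschitz property of F
  have hFlip : ∀ u z : Fin d → ℝ, |F u - F z|
      ≤ Real.sqrt 2 * Real.sqrt (∑ i, (u i - z i)^2) := by
    intro u z
    have h2 := hφ.dist_le_mul (a + Real.sqrt 2 • eqv.symm u) (a + Real.sqrt 2 • eqv.symm z)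
    rw [NNReal.coe_one, one_mul, Real.dist_eq, dist_eq_norm] at h2
    have h3 : a + Real.sqrt 2 • eqv.symm u - (a + Real.sqrt 2 • eqv.symm z)
        = Real.sqrt 2 • (eqv.symm u - eqv.symm z) := by
      rw [smul_sub]; abel
    rw [h3, norm_smul, Real.norm_eq_abs, abs_of_nonneg (Real.sqrt_nonneg 2)] at h2
    refine h2.trans (mul_le_mul_of_nonneg_left (le_of_eq ?_) (Real.sqrt_nonneg 2))
    rw [EuclideanSpace.norm_eq]
    congr 1
    refine Finset.sum_congr rfl fun i _ => ?_
    have : (eqv.symm u - eqv.symm z) i = u i - z i := rfl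
    rw [this, Real.norm_eq_abs, sq_abs]
  -- integrability of exp(s * F)
  have hexpint : ∀ s : ℝ, Integrable (fun u => Real.exp (s * F u)) pm := by
    intro s
    refine ((pi_exp_abs_sum_int (|s| * Real.sqrt 2) vh).const_mul
      (Real.exp (|s| * |φ a|))).mono' ((hFmeas.const_mul s).exp).aestronglyMeasurable
      (ae_of_all _ fun u => ?_)
    rw [Real.norm_eq_abs, abs_of_pos (Real.exp_pos _), ← Real.exp_add]
    refine Real.exp_le_exp.mpr ?_
    calc s * F u ≤ |s * F u| := le_abs_self _
      _ = |s| * |F u| := abs_mul s (F u)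
      _ ≤ |s| * (|φ a| + Real.sqrt 2 * ∑ i, |u i|) :=
          mul_le_mul_of_nonneg_left (hFbound u) (abs_nonneg s)
      _ = |s| * |φ a| + |s| * Real.sqrt 2 * ∑ i, |u i| := by ring
  -- integrability of F
  have hsumint : Integrable (fun u : Fin d → ℝ => ∑ i, |u i|) pm :=
    integrable_finset_sum _ fun i _ => (pi_marginal (gaussianReal 0 vh) i _ (gauss_abs_int vh)).1
  have hFint : Integrable F pm := by
    refine ((integrable_const (|φ a|)).add (hsumint.const_mul (Real.sqrt 2))).mono'
      hFmeas.aestronglyMeasurable (ae_of_all _ fun u => ?_)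
    rw [Real.norm_eq_abs]
    exact hFbound u
  -- identification of the mean
  have hCa : (∫ w, φ (a + w) ∂(stdGaussianE d (2*h))) = ∫ u, F u ∂pm := by
    have hgm : Measurable fun w : EuclideanSpace ℝ (Fin d) => φ (a + w) :=
      hφ.continuous.measurable.comp (measurable_id.const_add a)
    rw [stdGaussianE_two_smul hh.le,
      integral_map (measurable_const_smul (Real.sqrt 2)).aemeasurable
        hgm.aestronglyMeasurable]
    have : stdGaussianE d h = Measure.map eqv.symm pm := rfl
    rw [this, MeasureTheory.integral_map_equiv eqv.symm (fun z => φ (a + Real.sqrt 2 • z))]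
  set m := ∫ u, F u ∂pm with hm
  -- Jensen
  have hJ : Real.exp (t * m) ≤ ∫ u, Real.exp (t * F u) ∂pm := by
    have hpt : ∀ u, Real.exp (t * m) + Real.exp (t * m) * (t * F u - t * m)
        ≤ Real.exp (t * F u) := by
      intro u
      have h1 := Real.add_one_le_exp (t * F u - t * m)
      have h2 := mul_le_mul_of_nonneg_left h1 (Real.exp_nonneg (t * m))
      rw [← Real.exp_add] at h2
      have h3 : t * m + (t * F u - t * m) = t * F u := by ring
      rw [h3] at h2
      linarith
    have hLint : Integrable (fun u => Real.exp (t * m)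
        + Real.exp (t * m) * (t * F u - t * m)) pm := by
      have heq : (fun u => Real.exp (t * m) + Real.exp (t * m) * (t * F u - t * m))
          = (fun u => Real.exp (t * m) * (1 - t * m) + (Real.exp (t * m) * t) * F u) := by
        ext u; ring
      rw [heq]
      exact (integrable_const _).add (hFint.const_mul _)
    have hLeq : ∫ u, (Real.exp (t * m) + Real.exp (t * m) * (t * F u - t * m)) ∂pm
        = Real.exp (t * m) := by
      have heq : (fun u => Real.exp (t * m) + Real.exp (t * m) * (t * F u - t * m))
          = (fun u => Real.exp (t * m) * (1 - t * m) + (Real.exp (t * m) * t) * F u) := by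
        ext u; ring
      rw [heq, integral_add (integrable_const _) (hFint.const_mul _), integral_const,
        integral_const_mul, probReal_univ]
      simp only [ENNReal.toReal_one, one_smul, ← hm]
      ring
    have := integral_mono hLint (hexpint t) hpt
    rwa [hLeq] at this
  -- the main quantity, moved to pi space
  have hmain : Integrable (fun z : EuclideanSpace ℝ (Fin d) =>
      Real.exp (t * (m - φ (a + Real.sqrt 2 • z)))) (stdGaussianE d h) ∧
      ∫ z, Real.exp (t * (m - φ (a + Real.sqrt 2 • z))) ∂(stdGaussianE d h)
        ≤ Real.exp (2 * d^2 * t^2 * h) := by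
    have hrw0 : ∀ z : EuclideanSpace ℝ (Fin d), Real.exp (t * (m - φ (a + Real.sqrt 2 • z)))
        = Real.exp (t * m) * Real.exp (-t * φ (a + Real.sqrt 2 • z)) := by
      intro z; rw [← Real.exp_add]; ring_nf
    have hstd : stdGaussianE d h = Measure.map eqv.symm pm := rfl
    constructor
    · rw [hstd, integrable_map_equiv]
      refine (((hexpint (-t)).const_mul (Real.exp (t * m))).congr (ae_of_all _ fun u => ?_))
      rw [Function.comp_apply, hrw0]
    · rw [hstd, MeasureTheory.integral_map_equiv eqv.symm
        (fun z => Real.exp (t * (m - φ (a + Real.sqrt 2 • z))))]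
      have hIeq : ∫ u, Real.exp (t * (m - F u)) ∂pm
          = Real.exp (t * m) * ∫ u, Real.exp (-t * F u) ∂pm := by
        rw [← integral_const_mul]
        congr 1; ext u; exact hrw0 (eqv.symm u)
      calc ∫ u, Real.exp (t * (m - F u)) ∂pm
          = Real.exp (t * m) * ∫ u, Real.exp (-t * F u) ∂pm := hIeq
        _ ≤ (∫ u, Real.exp (t * F u) ∂pm) * ∫ u, Real.exp (-t * F u) ∂pm :=
            mul_le_mul_of_nonneg_right hJ (integral_nonneg fun u => Real.exp_nonneg _)
        _ ≤ Real.exp (2 * d^2 * t^2 * h) := by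
            set cc := t * Real.sqrt (2 * d) with hcc
            have hcc0 : 0 ≤ cc := mul_nonneg ht (Real.sqrt_nonneg _)
            have hGint : Integrable (fun p : (Fin d → ℝ) × (Fin d → ℝ) =>
                Real.exp (t * F p.1) * Real.exp (-t * F p.2)) (pm.prod pm) :=
              (hexpint t).mul_prod (hexpint (-t))
            have hGint' : Integrable (fun p : (Fin d → ℝ) × (Fin d → ℝ) =>
                Real.exp (-t * F p.1) * Real.exp (t * F p.2)) (pm.prod pm) :=
              (hexpint (-t)).mul_prod (hexpint t)
            have hswap : ∫ p : (Fin d → ℝ) × (Fin d → ℝ),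
                  Real.exp (-t * F p.1) * Real.exp (t * F p.2) ∂(pm.prod pm)
                = ∫ p : (Fin d → ℝ) × (Fin d → ℝ),
                  Real.exp (t * F p.1) * Real.exp (-t * F p.2) ∂(pm.prod pm) := by
              calc ∫ p : (Fin d → ℝ) × (Fin d → ℝ),
                    Real.exp (-t * F p.1) * Real.exp (t * F p.2) ∂(pm.prod pm)
                  = ∫ p : (Fin d → ℝ) × (Fin d → ℝ), Real.exp (-t * F p.1) * Real.exp (t * F p.2)
                      ∂(Measure.map Prod.swap (pm.prod pm)) := by rw [Measure.prod_swap]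
                _ = ∫ p : (Fin d → ℝ) × (Fin d → ℝ),
                    Real.exp (t * F p.1) * Real.exp (-t * F p.2) ∂(pm.prod pm) := by
                    rw [show (Prod.swap : (Fin d → ℝ) × (Fin d → ℝ) → (Fin d → ℝ) × (Fin d → ℝ))
                        = ⇑(MeasurableEquiv.prodComm (α := Fin d → ℝ) (β := Fin d → ℝ)) from rfl,
                      MeasureTheory.integral_map_equiv]
                    congr 1; ext p
                    simp only [MeasurableEquiv.prodComm, MeasurableEquiv.coe_mk,
                      Equiv.prodComm_apply, Prod.swap]
                    ring
            have hcosheq : ∫ p : (Fin d → ℝ) × (Fin d → ℝ),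
                  Real.exp (t * F p.1) * Real.exp (-t * F p.2) ∂(pm.prod pm)
                = ∫ p : (Fin d → ℝ) × (Fin d → ℝ),
                  Real.cosh (t * (F p.1 - F p.2)) ∂(pm.prod pm) := by
              have hpt2 : ∀ p : (Fin d → ℝ) × (Fin d → ℝ),
                  Real.cosh (t * (F p.1 - F p.2))
                    = (Real.exp (t * F p.1) * Real.exp (-t * F p.2)
                      + Real.exp (-t * F p.1) * Real.exp (t * F p.2)) / 2 := by
                intro p
                rw [Real.cosh_eq, ← Real.exp_add, ← Real.exp_add]
                ring_nf
              calc ∫ p : (Fin d → ℝ) × (Fin d → ℝ),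
                    Real.exp (t * F p.1) * Real.exp (-t * F p.2) ∂(pm.prod pm)
                  = (∫ p : (Fin d → ℝ) × (Fin d → ℝ),
                      (Real.exp (t * F p.1) * Real.exp (-t * F p.2)
                        + Real.exp (-t * F p.1) * Real.exp (t * F p.2)) ∂(pm.prod pm)) / 2 := by
                    rw [integral_add hGint hGint', hswap]; ring
                _ = ∫ p : (Fin d → ℝ) × (Fin d → ℝ),
                      Real.cosh (t * (F p.1 - F p.2)) ∂(pm.prod pm) := by
                    rw [← integral_div]
                    congr 1; ext p; rw [hpt2 p]
            have hptbd : ∀ p : (Fin d → ℝ) × (Fin d → ℝ), Real.cosh (t * (F p.1 - F p.2))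
                ≤ 1 + ∑ i, (Real.cosh (cc * (p.1 i - p.2 i)) - 1) := by
              intro p
              obtain ⟨j, -, hj⟩ := Finset.exists_max_image Finset.univ
                (fun i => |p.1 i - p.2 i|) ⟨⟨0, hd⟩, Finset.mem_univ _⟩
              have h2 : ∑ i, (p.1 i - p.2 i)^2 ≤ (d : ℝ) * (p.1 j - p.2 j)^2 := by
                calc ∑ i, (p.1 i - p.2 i)^2 ≤ ∑ _i : Fin d, (p.1 j - p.2 j)^2 :=
                    Finset.sum_le_sum fun i _ => by
                      have hji := hj i (Finset.mem_univ i)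
                      calc (p.1 i - p.2 i)^2 = |p.1 i - p.2 i|^2 := (sq_abs _).symm
                        _ ≤ |p.1 j - p.2 j|^2 := pow_le_pow_left₀ (abs_nonneg _) hji 2
                        _ = (p.1 j - p.2 j)^2 := sq_abs _
                  _ = (d : ℝ) * (p.1 j - p.2 j)^2 := by
                      rw [Finset.sum_const, Finset.card_univ, Fintype.card_fin, nsmul_eq_mul]
              have h1 : Real.sqrt (∑ i, (p.1 i - p.2 i)^2)
                  ≤ Real.sqrt d * |p.1 j - p.2 j| := by
                calc Real.sqrt (∑ i, (p.1 i - p.2 i)^2)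
                    ≤ Real.sqrt ((d : ℝ) * (p.1 j - p.2 j)^2) := Real.sqrt_le_sqrt h2
                  _ = Real.sqrt d * |p.1 j - p.2 j| := by
                      rw [Real.sqrt_mul (by positivity), Real.sqrt_sq_eq_abs]
              have h3 : |t * (F p.1 - F p.2)| ≤ |cc * (p.1 j - p.2 j)| := by
                rw [abs_mul, abs_of_nonneg ht, abs_mul, abs_of_nonneg hcc0]
                calc t * |F p.1 - F p.2|
                    ≤ t * (Real.sqrt 2 * Real.sqrt (∑ i, (p.1 i - p.2 i)^2)) :=
                      mul_le_mul_of_nonneg_left (hFlip _ _) ht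
                  _ ≤ t * (Real.sqrt 2 * (Real.sqrt d * |p.1 j - p.2 j|)) :=
                      mul_le_mul_of_nonneg_left
                        (mul_le_mul_of_nonneg_left h1 (Real.sqrt_nonneg 2)) ht
                  _ = cc * |p.1 j - p.2 j| := by
                      rw [hcc, Real.sqrt_mul (by norm_num : (0:ℝ) ≤ 2)]; ring
              have h4 : Real.cosh (t * (F p.1 - F p.2)) ≤ Real.cosh (cc * (p.1 j - p.2 j)) :=
                Real.cosh_le_cosh.mpr h3
              have h5 : Real.cosh (cc * (p.1 j - p.2 j)) - 1
                  ≤ ∑ i, (Real.cosh (cc * (p.1 i - p.2 i)) - 1) :=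
                Finset.single_le_sum (f := fun i => Real.cosh (cc * (p.1 i - p.2 i)) - 1)
                  (fun i _ => by
                    show (0:ℝ) ≤ Real.cosh (cc * (p.1 i - p.2 i)) - 1
                    linarith [Real.one_le_cosh (cc * (p.1 i - p.2 i))])
                  (Finset.mem_univ j)
              linarith
            have hterm_int : ∀ i : Fin d, Integrable (fun p : (Fin d → ℝ) × (Fin d → ℝ) =>
                Real.cosh (cc * (p.1 i - p.2 i)) - 1) (pm.prod pm) := fun i =>
              (prod_cosh_coord cc vh i).1.sub (integrable_const 1)
            have hRint : Integrable (fun p : (Fin d → ℝ) × (Fin d → ℝ) =>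
                1 + ∑ i, (Real.cosh (cc * (p.1 i - p.2 i)) - 1)) (pm.prod pm) :=
              (integrable_const 1).add (integrable_finset_sum _ fun i _ => hterm_int i)
            have hLint2 : Integrable (fun p : (Fin d → ℝ) × (Fin d → ℝ) =>
                Real.cosh (t * (F p.1 - F p.2))) (pm.prod pm) := by
              refine hRint.mono' ((((hFmeas.comp measurable_fst).sub
                (hFmeas.comp measurable_snd)).const_mul t).cosh).aestronglyMeasurable
                (ae_of_all _ fun p => ?_)
              rw [Real.norm_eq_abs,
                abs_of_nonneg (by linarith [Real.one_le_cosh (t * (F p.1 - F p.2))])]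
              exact hptbd p
            have hRval : ∫ p : (Fin d → ℝ) × (Fin d → ℝ),
                  (1 + ∑ i, (Real.cosh (cc * (p.1 i - p.2 i)) - 1)) ∂(pm.prod pm)
                = 1 + (d : ℝ) * (Real.exp (cc^2 * h) - 1) := by
              rw [integral_add (integrable_const 1)
                  (integrable_finset_sum _ fun i _ => hterm_int i),
                integral_const, probReal_univ, integral_finset_sum _ fun i _ => hterm_int i]
              have hterm : ∀ i : Fin d, ∫ p : (Fin d → ℝ) × (Fin d → ℝ),
                  (Real.cosh (cc * (p.1 i - p.2 i)) - 1) ∂(pm.prod pm)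
                    = Real.exp (cc^2 * h) - 1 := by
                intro i
                rw [integral_sub (prod_cosh_coord cc vh i).1 (integrable_const 1),
                  (prod_cosh_coord cc vh i).2, integral_const, probReal_univ, hvhr]
                simp
              rw [Finset.sum_congr rfl fun i _ => hterm i, Finset.sum_const,
                Finset.card_univ, Fintype.card_fin, nsmul_eq_mul]
              simp
            have hnum : 1 + (d : ℝ) * (Real.exp (cc^2 * h) - 1)
                ≤ Real.exp (2 * d^2 * t^2 * h) := by
              have hexp0 : (-2 : ℝ) ≤ Real.exp (cc^2 * h) - 1 := by
                linarith [Real.exp_nonneg (cc^2 * h)]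
              have h5 := one_add_mul_le_pow hexp0 d
              rw [add_sub_cancel] at h5
              have h6 : Real.exp (cc^2 * h) ^ d = Real.exp ((d : ℝ) * (cc^2 * h)) := by
                rw [← Real.exp_nat_mul]
              have h7 : (d : ℝ) * (cc^2 * h) = 2 * d^2 * t^2 * h := by
                rw [hcc, mul_pow, Real.sq_sqrt (by positivity : (0:ℝ) ≤ 2 * d)]
                ring
              rw [h6, h7] at h5
              exact h5
            calc (∫ u, Real.exp (t * F u) ∂pm) * ∫ u, Real.exp (-t * F u) ∂pm
                = ∫ p : (Fin d → ℝ) × (Fin d → ℝ),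
                    Real.exp (t * F p.1) * Real.exp (-t * F p.2) ∂(pm.prod pm) :=
                  (integral_prod_mul (f := fun u => Real.exp (t * F u))
                    (g := fun u => Real.exp (-t * F u))).symm
              _ = ∫ p : (Fin d → ℝ) × (Fin d → ℝ),
                    Real.cosh (t * (F p.1 - F p.2)) ∂(pm.prod pm) := hcosheq
              _ ≤ ∫ p : (Fin d → ℝ) × (Fin d → ℝ),
                    (1 + ∑ i, (Real.cosh (cc * (p.1 i - p.2 i)) - 1)) ∂(pm.prod pm) :=
                  integral_mono hLint2 hRint hptbd
              _ = 1 + (d : ℝ) * (Real.exp (cc^2 * h) - 1) := hRval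
              _ ≤ Real.exp (2 * d^2 * t^2 * h) := hnum
  obtain ⟨hint, hbound⟩ := hmain
  rw [hCa]
  exact ⟨hint, hbound⟩



lemma stdGaussianE_isProb (d : ℕ) (v : ℝ) : IsProbabilityMeasure (stdGaussianE d v) := by
  rw [stdGaussianE]
  exact Measure.isProbabilityMeasure_map
    ((MeasurableEquiv.toLp 2 (Fin d → ℝ)).measurable.aemeasurable)

lemma emp_isProb {d N : ℕ} (hN : 1 ≤ N) (y : Fin N → EuclideanSpace ℝ (Fin d)) :
    IsProbabilityMeasure (emp y) := by
  constructor
  rw [emp, Measure.smul_apply, Measure.finset_sum_apply]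
  simp only [MeasurableSet.univ, Measure.dirac_apply', Set.indicator_univ, Pi.one_apply,
    Finset.sum_const, Finset.card_univ, Fintype.card_fin, nsmul_eq_mul, mul_one, smul_eq_mul]
  rw [ENNReal.inv_mul_cancel]
  · exact_mod_cast Nat.pos_of_ne_zero (fun h0 => by omega) |>.ne'
  · exact ENNReal.natCast_ne_top N

lemma emp_integrable {d N : ℕ} (hN : 1 ≤ N) {y : Fin N → EuclideanSpace ℝ (Fin d)}
    {f : EuclideanSpace ℝ (Fin d) → ℝ} (hf : Measurable f) : Integrable f (emp y) := by
  rw [emp]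
  refine Integrable.smul_measure ?_ (by
    simp only [ne_eq, ENNReal.inv_eq_top]
    exact_mod_cast Nat.pos_of_ne_zero (fun h0 => by omega) |>.ne')
  exact integrable_finset_sum_measure.mpr fun k _ => integrable_dirac' hf (y k)

lemma emp_integral {d N : ℕ} (hN : 1 ≤ N) (y : Fin N → EuclideanSpace ℝ (Fin d))
    (f : EuclideanSpace ℝ (Fin d) → ℝ) (hf : Measurable f) :
    ∫ z, f z ∂(emp y) = (1 / N : ℝ) * ∑ k, f (y k) := by
  rw [emp, integral_smul_measure,
    integral_finset_sum_measure fun k _ => integrable_dirac' hf (y k)]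
  have : ∀ k : Fin N, ∫ z, f z ∂(Measure.dirac (y k)) = f (y k) := fun k =>
    integral_dirac' f (y k) hf.stronglyMeasurable
  rw [Finset.sum_congr rfl fun k _ => this k, ENNReal.toReal_inv]
  simp [smul_eq_mul, one_div]

lemma stdGaussianE_norm_int (d : ℕ) (v : ℝ) :
    Integrable (fun z : EuclideanSpace ℝ (Fin d) => ‖z‖) (stdGaussianE d v) := by
  rw [stdGaussianE, integrable_map_equiv]
  haveI : IsProbabilityMeasure (Measure.pi fun _ : Fin d => gaussianReal 0 v.toNNReal) :=
    inferInstance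
  have hsum : Integrable (fun u : Fin d → ℝ => ∑ i, |u i|)
      (Measure.pi fun _ : Fin d => gaussianReal 0 v.toNNReal) :=
    integrable_finset_sum _ fun i _ =>
      (pi_marginal (gaussianReal 0 v.toNNReal) i _ (gauss_abs_int _)).1
  refine hsum.mono'
    ((MeasurableEquiv.toLp 2 (Fin d → ℝ)).measurable.norm).aestronglyMeasurable
    (ae_of_all _ fun u => ?_)
  rw [Function.comp_apply, norm_norm]
  exact norm_esymm_le u

lemma heatSol_integral {d N : ℕ} (hN : 1 ≤ N) (y0 : Fin N → EuclideanSpace ℝ (Fin d))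
    (α : EuclideanSpace ℝ (Fin d)) {h : ℝ} (hh : 0 < h)
    (φ : EuclideanSpace ℝ (Fin d) → ℝ) (hφ : LipschitzWith 1 φ) :
    ∫ z, φ z ∂(heatSol y0 α h)
      = (1 / N : ℝ) * ∑ k, ∫ w, φ (y0 k + h • α + w) ∂(stdGaussianE d (2 * h)) := by
  haveI := stdGaussianE_isProb d (2 * h)
  haveI := emp_isProb hN y0
  set ν₂ := stdGaussianE d (2 * h) with hν₂
  have hTmeas : Measurable (fun p : EuclideanSpace ℝ (Fin d) × EuclideanSpace ℝ (Fin d) =>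
      p.1 + h • α + p.2) := (measurable_fst.add_const _).add measurable_snd
  have hgmeas : Measurable (fun p : EuclideanSpace ℝ (Fin d) × EuclideanSpace ℝ (Fin d) =>
      φ (p.1 + h • α + p.2)) := hφ.continuous.measurable.comp hTmeas
  have hgint : Integrable (fun p : EuclideanSpace ℝ (Fin d) × EuclideanSpace ℝ (Fin d) =>
      φ (p.1 + h • α + p.2)) ((emp y0).prod ν₂) := by
    have hb1 : Integrable (fun p : EuclideanSpace ℝ (Fin d) × EuclideanSpace ℝ (Fin d) =>
        ‖p.1‖ * (1:ℝ)) ((emp y0).prod ν₂) :=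
      (emp_integrable hN measurable_norm).mul_prod (integrable_const 1)
    have hb2 : Integrable (fun p : EuclideanSpace ℝ (Fin d) × EuclideanSpace ℝ (Fin d) =>
        (1:ℝ) * ‖p.2‖) ((emp y0).prod ν₂) :=
      (integrable_const 1).mul_prod (stdGaussianE_norm_int d (2 * h))
    refine (((integrable_const (|φ 0| + ‖h • α‖)).add hb1).add hb2).mono'
      hgmeas.aestronglyMeasurable (ae_of_all _ fun p => ?_)
    simp only [Real.norm_eq_abs, Pi.add_apply, mul_one, one_mul]
    have h1 : |φ (p.1 + h • α + p.2) - φ 0| ≤ ‖p.1 + h • α + p.2‖ := by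
      have := hφ.dist_le_mul (p.1 + h • α + p.2) 0
      rwa [NNReal.coe_one, one_mul, Real.dist_eq, dist_eq_norm, sub_zero] at this
    have h2 : ‖p.1 + h • α + p.2‖ ≤ ‖p.1‖ + ‖h • α‖ + ‖p.2‖ :=
      (norm_add_le _ _).trans (by linarith [norm_add_le p.1 (h • α)])
    have h3 : |φ (p.1 + h • α + p.2)| ≤ |φ 0| + |φ (p.1 + h • α + p.2) - φ 0| := by
      calc |φ (p.1 + h • α + p.2)| = |φ 0 + (φ (p.1 + h • α + p.2) - φ 0)| := by ring_nf
        _ ≤ _ := abs_add_le _ _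
    linarith
  have hfmeas : StronglyMeasurable (fun p1 : EuclideanSpace ℝ (Fin d) =>
      ∫ w, φ (p1 + h • α + w) ∂ν₂) :=
    hgmeas.stronglyMeasurable.integral_prod_right'
  rw [heatSol, integral_map hTmeas.aemeasurable hφ.continuous.measurable.aestronglyMeasurable,
    integral_prod _ hgint, emp_integral hN y0 _ hfmeas.measurable]

/-- Tail estimate for the deviation of the empirical measure of independent drifted
Brownian particles from the solution of the drift-heat equation, tested against a
1-Lipschitz function: `ℙ[∫φ d(m(h) − m^N_{Y_h}) > x] ≤ exp(−N x²/(C h))` with `C`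
depending only on `d`. -/
theorem tail_bound_lipschitz_test (d : ℕ) (hd : 0 < d) :
    ∃ C : ℝ, 0 < C ∧
      ∀ (α : EuclideanSpace ℝ (Fin d)) (N : ℕ), 1 ≤ N →
        ∀ (y0 : Fin N → EuclideanSpace ℝ (Fin d))
          (Ω : Type) (mΩ : MeasurableSpace Ω) (P : Measure Ω),
          IsProbabilityMeasure P →
          ∀ B : Fin N → ℝ → Ω → EuclideanSpace ℝ (Fin d),
            (∀ k t, Measurable (B k t)) →
            (∀ t : ℝ, 0 ≤ t → iIndepFun (fun k => B k t) P) →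
            (∀ (k) (t : ℝ), 0 ≤ t → Measure.map (B k t) P = stdGaussianE d t) →
            ∀ φ : EuclideanSpace ℝ (Fin d) → ℝ, LipschitzWith 1 φ →
              ∀ h : ℝ, 0 < h → ∀ x : ℝ, 0 < x →
                P {ω | x < (∫ z, φ z ∂(heatSol y0 α h)) -
                    (1 / N : ℝ) * ∑ k, φ (y0 k + h • α + Real.sqrt 2 • B k h ω)}
                  ≤ ENNReal.ofReal (Real.exp (-(N * x ^ 2) / (C * h))) := by
  refine ⟨8 * d ^ 2, by positivity, ?_⟩
  intro α N hN y0 Ω mΩ P hP B hBmeas hBindep hBlaw φ hφ h hh x hx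
  haveI := hP
  have hdR : (0:ℝ) < d := by exact_mod_cast hd
  have hNR : (0:ℝ) < N := by exact_mod_cast hN
  set Ca : Fin N → ℝ := fun k => ∫ w, φ (y0 k + h • α + w) ∂(stdGaussianE d (2 * h)) with hCadef
  set g : Fin N → EuclideanSpace ℝ (Fin d) → ℝ :=
    fun k z => Ca k - φ (y0 k + h • α + Real.sqrt 2 • z) with hgdef
  set X : Fin N → Ω → ℝ := fun k ω => g k (B k h ω) with hXdef
  have hgmeas : ∀ k, Measurable (g k) := fun k =>
    measurable_const.sub (hφ.continuous.measurable.comp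
      ((measurable_id.const_smul (Real.sqrt 2)).const_add (y0 k + h • α)))
  have hXmeas : ∀ k, Measurable (X k) := fun k => (hgmeas k).comp (hBmeas k h)
  have hheat : (∫ z, φ z ∂(heatSol y0 α h)) = (1 / N : ℝ) * ∑ k, Ca k :=
    heatSol_integral hN y0 α hh φ hφ
  -- event inclusion
  have hsub : {ω | x < (∫ z, φ z ∂(heatSol y0 α h)) -
      (1 / N : ℝ) * ∑ k, φ (y0 k + h • α + Real.sqrt 2 • B k h ω)}
      ⊆ {ω | (N : ℝ) * x ≤ (∑ k, X k) ω} := by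
    intro ω hω
    simp only [Set.mem_setOf_eq] at hω ⊢
    rw [Finset.sum_apply]
    have hsum : (∑ k, X k ω) = (∑ k, Ca k) - ∑ k, φ (y0 k + h • α + Real.sqrt 2 • B k h ω) := by
      rw [← Finset.sum_sub_distrib]
    rw [hheat] at hω
    have : x < (1 / N : ℝ) * ∑ k, X k ω := by rw [hsum, mul_sub]; linarith
    have h2 : (N : ℝ) * x < ∑ k, X k ω := by
      have := mul_lt_mul_of_pos_left this hNR
      rwa [← mul_assoc, mul_one_div, div_self hNR.ne', one_mul] at this
    linarith
  -- Chernoff setup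
  set t0 := x / (4 * d ^ 2 * h) with ht0def
  have ht0 : 0 ≤ t0 := by positivity
  have hlaw : ∀ k, Measure.map (B k h) P = stdGaussianE d h := fun k => hBlaw k h hh.le
  have hmgf : ∀ k : Fin N, mgf (X k) P t0 ≤ Real.exp (2 * d ^ 2 * t0 ^ 2 * h) := by
    intro k
    have hkey := key_mgf hd φ hφ (y0 k + h • α) hh ht0
    have heq : mgf (X k) P t0 = ∫ z, Real.exp (t0 * g k z) ∂(stdGaussianE d h) := by
      rw [mgf, ← hlaw k, integral_map (hBmeas k h).aemeasurable
        (((hgmeas k).const_mul t0).exp).aestronglyMeasurable]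
    rw [heq]
    exact hkey.2
  have hXint : ∀ k : Fin N, Integrable (fun ω => Real.exp (t0 * X k ω)) P := by
    intro k
    have hkey := (key_mgf hd φ hφ (y0 k + h • α) hh ht0).1
    rw [← hlaw k] at hkey
    exact (integrable_map_measure (((hgmeas k).const_mul t0).exp).aestronglyMeasurable
      (hBmeas k h).aemeasurable).mp hkey
  have hindep : iIndepFun X P :=
    (hBindep h hh.le).comp g hgmeas
  have hSint : Integrable (fun ω => Real.exp (t0 * (∑ k, X k) ω)) P :=
    hindep.integrable_exp_mul_sum hXmeas fun k _ => hXint k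
  have hchern := measure_ge_le_exp_mul_mgf (X := ∑ k, X k) (μ := P) ((N : ℝ) * x) ht0 hSint
  have hmgfsum : mgf (∑ k, X k) P t0 = ∏ k, mgf (X k) P t0 :=
    hindep.mgf_sum hXmeas Finset.univ
  have hfinal : (P {ω | (N : ℝ) * x ≤ (∑ k, X k) ω}).toReal
      ≤ Real.exp (-(N * x ^ 2) / ((8 * d ^ 2) * h)) := by
    refine hchern.trans ?_
    rw [hmgfsum]
    have hprodle : (∏ k, mgf (X k) P t0) ≤ ∏ _k : Fin N, Real.exp (2 * d ^ 2 * t0 ^ 2 * h) :=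
      Finset.prod_le_prod (fun k _ => mgf_nonneg) fun k _ => hmgf k
    calc Real.exp (-t0 * ((N : ℝ) * x)) * ∏ k, mgf (X k) P t0
        ≤ Real.exp (-t0 * ((N : ℝ) * x)) * Real.exp (2 * d ^ 2 * t0 ^ 2 * h) ^ N := by
          refine mul_le_mul_of_nonneg_left (hprodle.trans_eq ?_) (Real.exp_nonneg _)
          rw [Finset.prod_const, Finset.card_univ, Fintype.card_fin]
      _ = Real.exp (-(N * x ^ 2) / ((8 * d ^ 2) * h)) := by
          rw [← Real.exp_nat_mul, ← Real.exp_add]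
          congr 1
          rw [ht0def]
          field_simp
          ring
  calc P {ω | x < (∫ z, φ z ∂(heatSol y0 α h)) -
      (1 / N : ℝ) * ∑ k, φ (y0 k + h • α + Real.sqrt 2 • B k h ω)}
      ≤ P {ω | (N : ℝ) * x ≤ (∑ k, X k) ω} := measure_mono hsub
    _ = ENNReal.ofReal ((P {ω | (N : ℝ) * x ≤ (∑ k, X k) ω}).toReal) :=
        (ENNReal.ofReal_toReal (measure_ne_top P _)).symm
    _ ≤ ENNReal.ofReal (Real.exp (-(N * x ^ 2) / ((8 * d ^ 2) * h))) :=
        ENNReal.ofReal_le_ofReal hfinal
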